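/- Under the setting of the entropy-regularized optimal transport problem with marginals u, v > 0 (probability vectors) and cost C, the optimal solution X* satisfies min_{i,j} X*(i,j) ≥ (min_{i,j}{u(i), v(j)})² / (r² exp[4‖C‖_∞]). -/

import Mathlib

/-- Objective of the entropy-regularized optimal transport problem. -/
noncomputable def entOTobj {r : ℕ} (C X : Fin r → Fin r → ℝ) : ℝ :=
  (∑ i, ∑ j, C i j * X i j) + ∑ i, ∑ j, X i j * Real.log (X i j)

/-- Feasible set of the entropy-regularized OT problem with marginals `u, v`. -/
def entOTfeas {r : ℕ} (u v : Fin r → ℝ) (X : Fin r → Fin r → ℝ) : Prop :=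
  (∀ i j, 0 ≤ X i j) ∧ (∀ i, ∑ j, X i j = u i) ∧ (∀ j, ∑ i, X i j = v j)


lemma phi_add_le (t ε : ℝ) (ht : 0 ≤ t) (hε : 0 < ε) :
    (t + ε) * Real.log (t + ε) - t * Real.log t ≤ ε * (Real.log (t + ε) + 1) := by
  rcases eq_or_lt_of_le ht with h | h
  · rw [← h]; simp [Real.log_zero]; nlinarith
  · have hpos : 0 < t + ε := by linarith
    have hlog : Real.log (t + ε) - Real.log t ≤ ε / t := by
      rw [← Real.log_div (by positivity) (ne_of_gt h)]
      have := Real.log_le_sub_one_of_pos (show 0 < (t+ε)/t by positivity)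
      calc Real.log ((t+ε)/t) ≤ (t+ε)/t - 1 := this
        _ = ε / t := by field_simp; ring
    have : t * (Real.log (t + ε) - Real.log t) ≤ ε := by
      calc t * (Real.log (t + ε) - Real.log t) ≤ t * (ε / t) :=
            mul_le_mul_of_nonneg_left hlog h.le
        _ = ε := by field_simp
    nlinarith

lemma phi_sub_le (t ε : ℝ) (hε : 0 < ε) (hεt : ε < t) :
    (t - ε) * Real.log (t - ε) - t * Real.log t ≤ -(ε * (Real.log (t - ε) + 1)) := by
  have h : 0 < t := lt_trans hε hεt
  have hpos : 0 < t - ε := by linarith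
  have hlog : Real.log (t - ε) - Real.log t ≤ -ε / t := by
    rw [← Real.log_div (ne_of_gt hpos) (ne_of_gt h)]
    have := Real.log_le_sub_one_of_pos (show 0 < (t-ε)/t by positivity)
    calc Real.log ((t-ε)/t) ≤ (t-ε)/t - 1 := this
      _ = -ε / t := by field_simp; ring
  have : t * (Real.log (t - ε) - Real.log t) ≤ -ε := by
    calc t * (Real.log (t - ε) - Real.log t) ≤ t * (-ε / t) :=
          mul_le_mul_of_nonneg_left hlog h.le
      _ = -ε := by field_simp
  nlinarith

lemma sum_two {r : ℕ} (f : Fin r → ℝ) (b d : Fin r) (hbd : b ≠ d)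
    (h : ∀ j, j ≠ b → j ≠ d → f j = 0) : ∑ j, f j = f b + f d := by
  rw [← Finset.sum_pair hbd]
  exact (Finset.sum_subset (Finset.subset_univ _) (fun x _ hx => by
    simp only [Finset.mem_insert, Finset.mem_singleton] at hx
    push_neg at hx
    exact h x hx.1 hx.2)).symm

lemma sum_four {r : ℕ} (F : Fin r → Fin r → ℝ) (a c b d : Fin r) (hac : a ≠ c) (hbd : b ≠ d)
    (h : ∀ i j, ¬((i = a ∨ i = c) ∧ (j = b ∨ j = d)) → F i j = 0) :
    ∑ i, ∑ j, F i j = F a b + F a d + F c b + F c d := by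
  have inner : ∀ i, ∑ j, F i j = F i b + F i d := fun i =>
    sum_two (F i) b d hbd (fun j hjb hjd => h i j (fun hh => by tauto))
  calc ∑ i, ∑ j, F i j = ∑ i, (F i b + F i d) := Finset.sum_congr rfl (fun i _ => inner i)
    _ = (F a b + F a d) + (F c b + F c d) :=
        sum_two (fun i => F i b + F i d) a c hac
          (fun i hia hic => by
            rw [h i b (fun hh => by tauto), h i d (fun hh => by tauto)]; ring)
    _ = F a b + F a d + F c b + F c d := by ring

lemma entOT_cycle {r : ℕ} (C : Fin r → Fin r → ℝ) (u v : Fin r → ℝ)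
    (X : Fin r → Fin r → ℝ) (hfeas : entOTfeas u v X)
    (hopt : ∀ Y, entOTfeas u v Y → entOTobj C X ≤ entOTobj C Y)
    (a b c d : Fin r) :
    X a d * X c b ≤ Real.exp (C a b + C c d - C a d - C c b) * (X a b * X c d) := by
  obtain ⟨hXnn, hrow, hcol⟩ := hfeas
  by_cases hac : a = c
  · subst hac
    have h0 : C a b + C a d - C a d - C a b = 0 := by ring
    rw [h0, Real.exp_zero, one_mul]
    exact le_of_eq (mul_comm _ _)
  by_cases hbd : b = d
  · subst hbd
    have h0 : C a b + C c b - C a b - C c b = 0 := by ring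
    rw [h0, Real.exp_zero, one_mul]
  rcases eq_or_lt_of_le (hXnn a d) with had | had
  · rw [← had, zero_mul]
    exact mul_nonneg (Real.exp_pos _).le (mul_nonneg (hXnn a b) (hXnn c d))
  rcases eq_or_lt_of_le (hXnn c b) with hcb | hcb
  · rw [← hcb, mul_zero]
    exact mul_nonneg (Real.exp_pos _).le (mul_nonneg (hXnn a b) (hXnn c d))
  set ε₀ : ℝ := min (X a d) (X c b) / 2 with hε₀def
  have hε₀ : 0 < ε₀ := by
    have := lt_min had hcb
    positivity
  have key : ∀ ε ∈ Set.Ioc (0:ℝ) ε₀,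
      (X a d - ε) * (X c b - ε) ≤
        Real.exp (C a b + C c d - C a d - C c b) * ((X a b + ε) * (X c d + ε)) := by
    rintro ε ⟨hε, hεle⟩
    have hεad : ε < X a d := by
      have h1 := min_le_left (X a d) (X c b)
      rw [hε₀def] at hεle; linarith
    have hεcb : ε < X c b := by
      have h1 := min_le_right (X a d) (X c b)
      rw [hε₀def] at hεle; linarith
    set Y : Fin r → Fin r → ℝ := fun i j =>
      X i j + ((if i = a ∧ j = b then ε else 0) + (if i = c ∧ j = d then ε else 0)
        - (if i = a ∧ j = d then ε else 0) - (if i = c ∧ j = b then ε else 0)) with hY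
    have hYab : Y a b = X a b + ε := by
      simp [hY, hac, hbd, Ne.symm hac, Ne.symm hbd]
    have hYcd : Y c d = X c d + ε := by
      simp [hY, hac, hbd, Ne.symm hac, Ne.symm hbd]
    have hYad : Y a d = X a d - ε := by
      simp [hY, hac, hbd, Ne.symm hac, Ne.symm hbd]
      ring
    have hYcb : Y c b = X c b - ε := by
      simp [hY, hac, hbd, Ne.symm hac, Ne.symm hbd]
      ring
    have hYfeas : entOTfeas u v Y := by
      refine ⟨?_, ?_, ?_⟩
      · intro i j
        have t1 : (0:ℝ) ≤ (if i = a ∧ j = b then ε else 0) := by split_ifs <;> simp [hε.le]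
        have t2 : (0:ℝ) ≤ (if i = c ∧ j = d then ε else 0) := by split_ifs <;> simp [hε.le]
        by_cases h3 : i = a ∧ j = d
        · by_cases h4 : i = c ∧ j = b
          · exact absurd (h3.1.symm.trans h4.1) hac
          · have hXij : X i j = X a d := by rw [h3.1, h3.2]
            simp only [hY, if_pos h3, if_neg h4]
            linarith
        · by_cases h4 : i = c ∧ j = b
          · have hXij : X i j = X c b := by rw [h4.1, h4.2]
            simp only [hY, if_neg h3, if_pos h4]
            linarith
          · simp only [hY, if_neg h3, if_neg h4]
            have := hXnn i j
            linarith
      · intro i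
        have hs1 : ∀ (p q : Fin r), ∑ j, (if i = p ∧ j = q then ε else 0) =
            if i = p then ε else 0 := by
          intro p q
          by_cases hip : i = p <;> simp [hip, Finset.sum_ite_eq']
        have : ∑ j, Y i j = (∑ j, X i j) + ((if i = a then ε else 0) + (if i = c then ε else 0)
            - (if i = a then ε else 0) - (if i = c then ε else 0)) := by
          simp only [hY]
          rw [Finset.sum_add_distrib, Finset.sum_sub_distrib, Finset.sum_sub_distrib,
            Finset.sum_add_distrib, hs1, hs1, hs1, hs1]
        rw [this, hrow i]; ring
      · intro j
        have hs1 : ∀ (p q : Fin r), ∑ i, (if i = p ∧ j = q then ε else 0) =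
            if j = q then ε else 0 := by
          intro p q
          by_cases hjq : j = q <;> simp [hjq, Finset.sum_ite_eq']
        have : ∑ i, Y i j = (∑ i, X i j) + ((if j = b then ε else 0) + (if j = d then ε else 0)
            - (if j = d then ε else 0) - (if j = b then ε else 0)) := by
          simp only [hY]
          rw [Finset.sum_add_distrib, Finset.sum_sub_distrib, Finset.sum_sub_distrib,
            Finset.sum_add_distrib, hs1, hs1, hs1, hs1]
        rw [this, hcol j]; ring
    set F : Fin r → Fin r → ℝ := fun i j =>
      (C i j * Y i j + Y i j * Real.log (Y i j)) - (C i j * X i j + X i j * Real.log (X i j))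
      with hF
    have hFsum : ∑ i, ∑ j, F i j = entOTobj C Y - entOTobj C X := by
      unfold entOTobj
      simp only [hF, Finset.sum_sub_distrib, Finset.sum_add_distrib]
      try ring
    have hvanish : ∀ i j, ¬((i = a ∨ i = c) ∧ (j = b ∨ j = d)) → F i j = 0 := by
      intro i j hij
      have e1 : ¬(i = a ∧ j = b) := fun hh => hij ⟨Or.inl hh.1, Or.inl hh.2⟩
      have e2 : ¬(i = c ∧ j = d) := fun hh => hij ⟨Or.inr hh.1, Or.inr hh.2⟩
      have e3 : ¬(i = a ∧ j = d) := fun hh => hij ⟨Or.inl hh.1, Or.inr hh.2⟩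
      have e4 : ¬(i = c ∧ j = b) := fun hh => hij ⟨Or.inr hh.1, Or.inl hh.2⟩
      simp only [hF, hY, if_neg e1, if_neg e2, if_neg e3, if_neg e4]
      try ring
    have h0 : (0:ℝ) ≤ F a b + F a d + F c b + F c d := by
      rw [← sum_four F a c b d hac hbd hvanish, hFsum]
      have := hopt Y hYfeas
      linarith
    have hFab : F a b ≤ ε * C a b + ε * (Real.log (X a b + ε) + 1) := by
      have hphi := phi_add_le (X a b) ε (hXnn a b) hε
      have hexp : C a b * (X a b + ε) = C a b * X a b + ε * C a b := by ring
      simp only [hF, hYab]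
      linarith
    have hFcd : F c d ≤ ε * C c d + ε * (Real.log (X c d + ε) + 1) := by
      have hphi := phi_add_le (X c d) ε (hXnn c d) hε
      have hexp : C c d * (X c d + ε) = C c d * X c d + ε * C c d := by ring
      simp only [hF, hYcd]
      linarith
    have hFad : F a d ≤ -(ε * C a d) - ε * (Real.log (X a d - ε) + 1) := by
      have hphi := phi_sub_le (X a d) ε hε hεad
      have hexp : C a d * (X a d - ε) = C a d * X a d - ε * C a d := by ring
      simp only [hF, hYad]
      linarith
    have hFcb : F c b ≤ -(ε * C c b) - ε * (Real.log (X c b - ε) + 1) := by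
      have hphi := phi_sub_le (X c b) ε hε hεcb
      have hexp : C c b * (X c b - ε) = C c b * X c b - ε * C c b := by ring
      simp only [hF, hYcb]
      linarith
    have hεS : 0 ≤ ε * ((C a b + C c d - C a d - C c b) + Real.log (X a b + ε)
        + Real.log (X c d + ε) - Real.log (X a d - ε) - Real.log (X c b - ε)) := by
      nlinarith [h0, hFab, hFcd, hFad, hFcb]
    have hS : 0 ≤ (C a b + C c d - C a d - C c b) + Real.log (X a b + ε)
        + Real.log (X c d + ε) - Real.log (X a d - ε) - Real.log (X c b - ε) := by
      by_contra hcon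
      push_neg at hcon
      have := mul_neg_of_pos_of_neg hε hcon
      linarith
    have hp1 : (0:ℝ) < X a b + ε := by have := hXnn a b; linarith
    have hp2 : (0:ℝ) < X c d + ε := by have := hXnn c d; linarith
    have hp3 : (0:ℝ) < X a d - ε := by linarith
    have hp4 : (0:ℝ) < X c b - ε := by linarith
    have hlogs : Real.log ((X a d - ε) * (X c b - ε)) ≤
        (C a b + C c d - C a d - C c b) + Real.log ((X a b + ε) * (X c d + ε)) := by
      rw [Real.log_mul hp3.ne' hp4.ne', Real.log_mul hp1.ne' hp2.ne']
      linarith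
    calc (X a d - ε) * (X c b - ε) = Real.exp (Real.log ((X a d - ε) * (X c b - ε))) :=
          (Real.exp_log (by positivity)).symm
      _ ≤ Real.exp ((C a b + C c d - C a d - C c b) + Real.log ((X a b + ε) * (X c d + ε))) :=
          Real.exp_le_exp.mpr hlogs
      _ = Real.exp (C a b + C c d - C a d - C c b) * ((X a b + ε) * (X c d + ε)) := by
          rw [Real.exp_add, Real.exp_log (by positivity)]
  -- limit as ε → 0⁺
  have lim1 : Filter.Tendsto (fun ε : ℝ => (X a d - ε) * (X c b - ε))
      (nhdsWithin 0 (Set.Ioi 0)) (nhds (X a d * X c b)) := by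
    have hc : Continuous fun ε : ℝ => (X a d - ε) * (X c b - ε) := by fun_prop
    refine Filter.Tendsto.mono_left ?_ nhdsWithin_le_nhds
    simpa using hc.tendsto 0
  have lim2 : Filter.Tendsto (fun ε : ℝ =>
      Real.exp (C a b + C c d - C a d - C c b) * ((X a b + ε) * (X c d + ε)))
      (nhdsWithin 0 (Set.Ioi 0))
      (nhds (Real.exp (C a b + C c d - C a d - C c b) * (X a b * X c d))) := by
    have hc : Continuous fun ε : ℝ =>
        Real.exp (C a b + C c d - C a d - C c b) * ((X a b + ε) * (X c d + ε)) := by fun_prop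
    refine Filter.Tendsto.mono_left ?_ nhdsWithin_le_nhds
    simpa using hc.tendsto 0
  have hev : ∀ᶠ ε in nhdsWithin (0:ℝ) (Set.Ioi 0),
      (X a d - ε) * (X c b - ε) ≤
        Real.exp (C a b + C c d - C a d - C c b) * ((X a b + ε) * (X c d + ε)) := by
    filter_upwards [Ioc_mem_nhdsGT_of_mem (Set.left_mem_Ico.mpr hε₀)] with ε hε
    exact key ε hε
  exact le_of_tendsto_of_tendsto lim1 lim2 hev

/-- Entrywise lower bound on the optimal solution of the entropy-regularized OT problem:
`min_{i,j} X*(i,j) ≥ (min_{i,j}{u(i), v(j)})² / (r² exp[4‖C‖_∞])`. -/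
theorem entOT_entry_lower_bound (r : ℕ) (hr : 0 < r) (C : Fin r → Fin r → ℝ) (u v : Fin r → ℝ)
    (hu : ∀ i, 0 < u i) (hv : ∀ i, 0 < v i)
    (husum : ∑ i, u i = 1) (hvsum : ∑ i, v i = 1)
    (X : Fin r → Fin r → ℝ) (hfeas : entOTfeas u v X)
    (hopt : ∀ Y, entOTfeas u v Y → entOTobj C X ≤ entOTobj C Y) :
    ∀ i j, (min (⨅ i : Fin r, u i) (⨅ j : Fin r, v j)) ^ 2 /
        ((r : ℝ) ^ 2 * Real.exp (4 * ⨆ i : Fin r, ⨆ j : Fin r, |C i j|)) ≤ X i j := by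
  haveI : Nonempty (Fin r) := ⟨⟨0, hr⟩⟩
  obtain ⟨hXnn, hrow, hcol⟩ := hfeas
  intro i j
  have hrpos : (0:ℝ) < r := Nat.cast_pos.mpr hr
  have hne : (Finset.univ : Finset (Fin r)).Nonempty := Finset.univ_nonempty
  -- choose a column d with a large entry in row i
  have hd : ∃ d, u i / r ≤ X i d := by
    by_contra hcon
    push_neg at hcon
    have hlt : ∑ d, X i d < ∑ _d : Fin r, u i / r :=
      Finset.sum_lt_sum_of_nonempty hne (fun d _ => hcon d)
    rw [hrow i] at hlt
    rw [Finset.sum_const, Finset.card_univ, Fintype.card_fin, nsmul_eq_mul] at hlt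
    rw [mul_div_cancel₀ _ hrpos.ne'] at hlt
    exact lt_irrefl _ hlt
  obtain ⟨d, hd⟩ := hd
  have hc : ∃ c, v j / r ≤ X c j := by
    by_contra hcon
    push_neg at hcon
    have hlt : ∑ c, X c j < ∑ _c : Fin r, v j / r :=
      Finset.sum_lt_sum_of_nonempty hne (fun c _ => hcon c)
    rw [hcol j] at hlt
    rw [Finset.sum_const, Finset.card_univ, Fintype.card_fin, nsmul_eq_mul] at hlt
    rw [mul_div_cancel₀ _ hrpos.ne'] at hlt
    exact lt_irrefl _ hlt
  obtain ⟨c, hc⟩ := hc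
  have hcyc := entOT_cycle C u v X ⟨hXnn, hrow, hcol⟩ hopt i j c d
  set M : ℝ := ⨆ p : Fin r, ⨆ q : Fin r, |C p q| with hM
  have hbdd : ∀ p q, |C p q| ≤ M := by
    intro p q
    have h2 : |C p q| ≤ ⨆ q, |C p q| :=
      le_ciSup (f := fun q => |C p q|) (Set.Finite.bddAbove (Set.finite_range _)) q
    have h1 : (⨆ q, |C p q|) ≤ M :=
      le_ciSup (f := fun p => ⨆ q, |C p q|) (Set.Finite.bddAbove (Set.finite_range _)) p
    exact h2.trans h1
  have hΔ : C i j + C c d - C i d - C c j ≤ 4 * M := by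
    have h1 := abs_le.mp (hbdd i j)
    have h2 := abs_le.mp (hbdd c d)
    have h3 := abs_le.mp (hbdd i d)
    have h4 := abs_le.mp (hbdd c j)
    linarith [h1.2, h2.2, h3.1, h4.1]
  have hXcd1 : X c d ≤ 1 := by
    have h1 : X c d ≤ ∑ q, X c q := Finset.single_le_sum (fun q _ => (hXnn c q)) (Finset.mem_univ d)
    have h2 : u c ≤ ∑ p, u p := Finset.single_le_sum (fun p _ => (hu p).le) (Finset.mem_univ c)
    rw [hrow c] at h1
    rw [husum] at h2
    linarith
  have key2 : X i d * X c j ≤ Real.exp (4 * M) * X i j := by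
    calc X i d * X c j ≤ Real.exp (C i j + C c d - C i d - C c j) * (X i j * X c d) := hcyc
      _ ≤ Real.exp (4 * M) * (X i j * X c d) :=
          mul_le_mul_of_nonneg_right (Real.exp_le_exp.mpr hΔ)
            (mul_nonneg (hXnn i j) (hXnn c d))
      _ ≤ Real.exp (4 * M) * (X i j * 1) := by
          apply mul_le_mul_of_nonneg_left _ (Real.exp_pos _).le
          exact mul_le_mul_of_nonneg_left hXcd1 (hXnn i j)
      _ = Real.exp (4 * M) * X i j := by ring
  set m : ℝ := min (⨅ p : Fin r, u p) (⨅ q : Fin r, v q) with hm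
  have hm0 : 0 ≤ m :=
    le_min (le_ciInf fun p => (hu p).le) (le_ciInf fun q => (hv q).le)
  have hmu : m ≤ u i :=
    (min_le_left _ _).trans (ciInf_le (Set.Finite.bddBelow (Set.finite_range _)) i)
  have hmv : m ≤ v j :=
    (min_le_right _ _).trans (ciInf_le (Set.Finite.bddBelow (Set.finite_range _)) j)
  rw [div_le_iff₀ (by positivity)]
  have e1 : u i ≤ r * X i d := by
    rw [div_le_iff₀ hrpos] at hd
    linarith
  have e2 : v j ≤ r * X c j := by
    rw [div_le_iff₀ hrpos] at hc
    linarith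
  have e3 : u i * v j ≤ (r * X i d) * (r * X c j) :=
    mul_le_mul e1 e2 (hv j).le (mul_nonneg hrpos.le (hXnn i d))
  have e4 : (r:ℝ)^2 * (X i d * X c j) ≤ (r:ℝ)^2 * (Real.exp (4 * M) * X i j) :=
    mul_le_mul_of_nonneg_left key2 (by positivity)
  have e5 : m ^ 2 ≤ u i * v j := by nlinarith
  nlinarith [e3, e4, e5]
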